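/- Let k be a field and λ_3,…,λ_t ∈ k pairwise distinct nonzero scalars. Give the polynomial ring k[X_1,…,X_t] the L-grading in which the monomial X_1^{m_1}⋯X_t^{m_t} has degree m_1·x⃗_1 + ⋯ + m_t·x⃗_t ∈ L, and let S = k[X_1,…,X_t]/⟨X_i^{p_i} − X_1^{p_1} − λ_i·X_2^{p_2} : i = 3,…,t⟩ (the defining polynomials are homogeneous of degree c⃗). For y⃗ ∈ L with normal form y⃗ = l·c⃗ + Σ_{i=1}^t l_i·x⃗_i (l ∈ ℤ, 0 ≤ l_i ≤ p_i−1), the k-subspace of S spanned by the residue classes of all monomials of degree y⃗ has dimension l + 1 if l ≥ 0, and is the zero subspace if l < 0. -/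

import Mathlib

set_option linter.unusedSectionVars false
set_option maxHeartbeats 1000000


open scoped BigOperators

namespace WPL

/-- The rank-one abelian group `L(p₁,…,p_t)`: the quotient of `ℤ^t` by the
subgroup generated by the elements `p 0 • e 0 - p i • e i`. -/
def rel (t : ℕ) [NeZero t] (p : Fin t → ℕ) : Submodule ℤ (Fin t → ℤ) :=
  Submodule.span ℤ
    { v | ∃ i : Fin t, v = (p 0 : ℤ) • Pi.single (0 : Fin t) (1 : ℤ) - (p i : ℤ) • Pi.single i (1 : ℤ) }

/-- The group `L(p₁,…,p_t)`. -/
abbrev L (t : ℕ) [NeZero t] (p : Fin t → ℕ) : Type :=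
  (Fin t → ℤ) ⧸ rel t p

/-- The generator `x⃗ᵢ` of `L`. -/
def xg (t : ℕ) [NeZero t] (p : Fin t → ℕ) (i : Fin t) : L t p :=
  Submodule.Quotient.mk (Pi.single i (1 : ℤ))

/-- The canonical element `c⃗ = p₁ • x⃗₁`. -/
noncomputable def cg (t : ℕ) [NeZero t] (p : Fin t → ℕ) : L t p :=
  (p 0 : ℤ) • xg t p 0

/-- `y ∈ L_+`, i.e. `y ≥ 0`: `y` is an ℕ-linear combination of the `x⃗ᵢ`. -/
def pos (t : ℕ) [NeZero t] (p : Fin t → ℕ) (y : L t p) : Prop :=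
  ∃ a : Fin t → ℕ, y = ∑ i, (a i : ℤ) • xg t p i

/-- The dualizing element `w⃗ = (t-2) • c⃗ - ∑ x⃗ᵢ`. -/
noncomputable def wg (t : ℕ) [NeZero t] (p : Fin t → ℕ) : L t p :=
  ((t : ℤ) - 2) • cg t p - ∑ i, xg t p i

/-- The dominant element `δ⃗ = c⃗ + 2 • w⃗`. -/
noncomputable def dg (t : ℕ) [NeZero t] (p : Fin t → ℕ) : L t p :=
  cg t p + 2 • wg t p

end WPL


namespace WPLAux
open WPL

variable (t : ℕ) [NeZero t] (p : Fin t → ℕ)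

/-- `p i • x i = c` in `L`. -/
lemma p_smul_xg (i : Fin t) : (p i : ℤ) • xg t p i = cg t p := by
  unfold cg xg
  rw [← Submodule.Quotient.mk_smul, ← Submodule.Quotient.mk_smul,
    Submodule.Quotient.eq, ← neg_sub]
  exact neg_mem (Submodule.subset_span ⟨i, rfl⟩)

lemma p_ne_zero (hp : ∀ i, 2 ≤ p i) (i : Fin t) : (p i : ℤ) ≠ 0 := by
  have := hp i; positivity

lemma Pd_mul (i : Fin t) :
    ((∏ j, (p j : ℤ)) / (p i : ℤ)) * (p i : ℤ) = ∏ j, (p j : ℤ) :=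
  Int.ediv_mul_cancel (Finset.dvd_prod_of_mem _ (Finset.mem_univ i))

/-- The weight functional on `ℤ^t`. -/
noncomputable def phi0 : (Fin t → ℤ) →ₗ[ℤ] ℤ where
  toFun v := ∑ i, ((∏ j, (p j : ℤ)) / (p i : ℤ)) * v i
  map_add' u v := by simp [mul_add, Finset.sum_add_distrib]
  map_smul' c v := by simp [Finset.mul_sum, mul_left_comm]

lemma phi0_single (i : Fin t) :
    phi0 t p (Pi.single i (1 : ℤ)) = (∏ j, (p j : ℤ)) / (p i : ℤ) := by
  simp only [phi0, LinearMap.coe_mk, AddHom.coe_mk]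
  rw [Finset.sum_eq_single i]
  · simp
  · intro b _ hb; simp [Pi.single_apply, hb]
  · simp

/-- The weight functional on `L`. -/
noncomputable def phi : L t p →ₗ[ℤ] ℤ := by
  refine (rel t p).liftQ (phi0 t p) ?_
  rw [rel, Submodule.span_le]
  rintro v ⟨i, rfl⟩
  simp only [SetLike.mem_coe, LinearMap.mem_ker, map_sub, map_smul, phi0_single,
    smul_eq_mul]
  rw [mul_comm, mul_comm ((p i : ℤ)), Pd_mul, Pd_mul, sub_self]

lemma phi_xg (i : Fin t) : phi t p (xg t p i) = (∏ j, (p j : ℤ)) / (p i : ℤ) := by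
  simpa [phi, xg] using phi0_single t p i

lemma phi_cg : phi t p (cg t p) = ∏ j, (p j : ℤ) := by
  rw [cg, map_smul, phi_xg, smul_eq_mul, mul_comm, Pd_mul]

/-- The mod-`p i` functional on `L`. -/
noncomputable def psi (i : Fin t) : L t p →ₗ[ℤ] ZMod (p i) := by
  refine (rel t p).liftQ
    ((Int.castAddHom (ZMod (p i))).toIntLinearMap.comp (LinearMap.proj i)) ?_
  rw [rel, Submodule.span_le]
  rintro v ⟨j, rfl⟩
  simp only [SetLike.mem_coe, LinearMap.mem_ker, map_sub, map_smul, LinearMap.coe_comp,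
    Function.comp_apply, LinearMap.proj_apply]
  by_cases h0 : i = 0 <;> by_cases hj : i = j <;>
    subst_eqs <;>
    simp_all [Pi.single_apply, ZMod.natCast_self]

lemma psi_xg (i j : Fin t) :
    psi t p i (xg t p j) = if j = i then 1 else 0 := by
  simp only [psi, xg, Submodule.liftQ_apply, LinearMap.coe_comp, Function.comp_apply,
    LinearMap.proj_apply, AddMonoidHom.coe_toIntLinearMap, Int.coe_castAddHom,
    Pi.single_apply]
  rcases eq_or_ne j i with h | h
  · subst h; simp
  · rw [if_neg (fun hh => h hh.symm), if_neg h]; simp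



variable (t : ℕ) [NeZero t] (p : Fin t → ℕ)

/-- Sufficiency: exponent vectors of the shape `coef + p * b` have degree `y`. -/
lemma deg_of (coef b : Fin t → ℤ) (m : Fin t → ℕ)
    (hm : ∀ i, (m i : ℤ) = coef i + (p i : ℤ) * b i) :
    ∑ i, (m i : ℤ) • xg t p i
      = (∑ i, b i) • cg t p + ∑ i, coef i • xg t p i := by
  rw [Finset.sum_smul, ← Finset.sum_add_distrib]
  refine Finset.sum_congr rfl fun i _ => ?_
  rw [hm i, ← p_smul_xg t p i, add_smul, mul_comm, mul_smul, add_comm]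

/-- Necessity: any exponent vector of degree `y` has the shape `coef + p * b`
with `∑ b = l`. -/
lemma deg_inv (hp : ∀ i, 2 ≤ p i) (coef : Fin t → ℤ)
    (hcoef : ∀ i, 0 ≤ coef i ∧ coef i ≤ (p i : ℤ) - 1) (l : ℤ) (m : Fin t → ℕ)
    (hdeg : ∑ i, (m i : ℤ) • xg t p i = l • cg t p + ∑ i, coef i • xg t p i) :
    ∃ b : Fin t → ℕ, (∀ i, (m i : ℤ) = coef i + (p i : ℤ) * b i)
      ∧ (∑ i, (b i : ℤ)) = l := by
  have hcong : ∀ i, (p i : ℤ) ∣ ((m i : ℤ) - coef i) := by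
    intro i
    have h := congrArg (psi t p i) hdeg
    have hc : psi t p i (cg t p) = 0 := by
      rw [← p_smul_xg t p i, map_smul, psi_xg, if_pos rfl, zsmul_eq_mul, mul_one]
      simp
    simp only [map_add, map_sum, map_smul, psi_xg, hc, smul_zero, zero_add,
      smul_ite, smul_zero, Finset.sum_ite_eq', Finset.mem_univ, if_pos,
      zsmul_eq_mul, mul_one] at h
    rw [← ZMod.intCast_zmod_eq_zero_iff_dvd]
    push_cast
    rw [sub_eq_zero]
    exact_mod_cast h
  -- the quotients
  have hb : ∀ i, ∃ bi : ℕ, (m i : ℤ) = coef i + (p i : ℤ) * bi := by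
    intro i
    obtain ⟨c, hc⟩ := hcong i
    have hc0 : 0 ≤ c := by
      rcases hcoef i with ⟨h1, h2⟩
      by_contra hneg
      push_neg at hneg
      have hcle : c ≤ -1 := by omega
      have hpi : (2 : ℤ) ≤ (p i : ℤ) := by exact_mod_cast hp i
      nlinarith [Int.natCast_nonneg (m i), mul_le_mul_of_nonneg_left hcle (by linarith : (0:ℤ) ≤ (p i : ℤ))]
    refine ⟨c.toNat, ?_⟩
    rw [Int.toNat_of_nonneg hc0]
    linarith [hc]
  choose b hbspec using hb
  refine ⟨b, hbspec, ?_⟩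
  -- apply phi
  have h := congrArg (phi t p) hdeg
  simp only [map_add, map_sum, map_smul, phi_xg, phi_cg, smul_eq_mul] at h
  have hP : (∏ j, (p j : ℤ)) ≠ 0 := by
    refine Finset.prod_ne_zero_iff.mpr fun j _ => p_ne_zero t p hp j
  have hsub : ∀ i : Fin t, (m i : ℤ) * ((∏ j, (p j : ℤ)) / (p i : ℤ))
      = coef i * ((∏ j, (p j : ℤ)) / (p i : ℤ)) + (b i : ℤ) * (∏ j, (p j : ℤ)) := by
    intro i
    rw [hbspec i, add_mul, mul_comm ((p i : ℤ)) (b i : ℤ), mul_assoc, mul_comm ((p i : ℤ)), Pd_mul]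
  simp only [hsub, Finset.sum_add_distrib, ← Finset.sum_mul] at h
  have h2 : (∑ i, (b i : ℤ)) * (∏ j, (p j : ℤ)) = l * (∏ j, (p j : ℤ)) := by
    linarith [h]
  exact mul_right_cancel₀ hP h2

def bfun (t : ℕ) [NeZero t] (n a : ℕ) : Fin t → ℕ := fun i =>
  if i = (0 : Fin t) then a else if i = (1 : Fin t) then n - a else 0

def mExp (t : ℕ) [NeZero t] (p : Fin t → ℕ) (c : Fin t → ℕ) (n a : ℕ) : Fin t → ℕ := fun i =>
  c i + (if i = (0 : Fin t) then a * p 0 else if i = (1 : Fin t) then (n - a) * p 1 else 0)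

lemma one_ne_zero_fin (t : ℕ) [NeZero t] (ht : 3 ≤ t) : (1 : Fin t) ≠ (0 : Fin t) := by
  intro h
  have h1 : ((1 : Fin t) : ℕ) = 1 % t := Fin.val_one' t
  have h2 : 1 % t = 1 := Nat.mod_eq_of_lt (by omega)
  rw [h] at h1
  have h0 : ((0 : Fin t) : ℕ) = 0 := rfl
  omega

lemma mExp_eq (t : ℕ) [NeZero t] (p c : Fin t → ℕ) (n a : ℕ) (i : Fin t) :
    mExp t p c n a i = c i + p i * bfun t n a i := by
  unfold mExp bfun
  by_cases h0 : i = (0 : Fin t)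
  · subst h0; rw [if_pos rfl, if_pos rfl, mul_comm]
  · by_cases h1 : i = (1 : Fin t)
    · subst h1; rw [if_neg h0, if_pos rfl, if_neg h0, if_pos rfl, mul_comm]
    · rw [if_neg h0, if_neg h1, if_neg h0, if_neg h1, mul_zero]

lemma prod_pow_split {M : Type*} [CommMonoid M] (t : ℕ) [NeZero t] (w : Fin t → M)
    (m c b pp : Fin t → ℕ) (h : ∀ i, m i = c i + pp i * b i) :
    ∏ i, w i ^ m i = (∏ i, w i ^ c i) * ∏ i, (w i ^ pp i) ^ b i := by
  rw [← Finset.prod_mul_distrib]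
  exact Finset.prod_congr rfl fun i _ => by rw [h i, pow_add, pow_mul]

lemma prod_pow_bfun {M : Type*} [CommMonoid M] (t : ℕ) [NeZero t] (ht : 3 ≤ t)
    (w : Fin t → M) (n a : ℕ) :
    ∏ i, w i ^ (bfun t n a i) = w 0 ^ a * w 1 ^ (n - a) := by
  have h10 := one_ne_zero_fin t ht
  have key : ∀ i : Fin t, w i ^ (bfun t n a i) =
      (if i = (0 : Fin t) then w 0 ^ a else 1) *
      (if i = (1 : Fin t) then w 1 ^ (n - a) else 1) := by
    intro i
    unfold bfun
    by_cases h0 : i = (0 : Fin t)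
    · subst h0
      rw [if_pos rfl, if_pos rfl, if_neg (fun h => h10 h.symm), mul_one]
    · by_cases h1 : i = (1 : Fin t)
      · subst h1
        rw [if_neg h0, if_pos rfl, if_neg h0, if_pos rfl, one_mul]
      · rw [if_neg h0, if_neg h1, if_neg h0, if_neg h1, pow_zero, mul_one]
  rw [Finset.prod_congr rfl (fun i _ => key i), Finset.prod_mul_distrib]
  congr 1
  · rw [Finset.prod_ite_eq' Finset.univ (0 : Fin t) (fun _ => w 0 ^ a), if_pos (Finset.mem_univ _)]
  · rw [Finset.prod_ite_eq' Finset.univ (1 : Fin t) (fun _ => w 1 ^ (n - a)), if_pos (Finset.mem_univ _)]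

lemma sum_bfun (t : ℕ) [NeZero t] (ht : 3 ≤ t) (n a : ℕ) (ha : a ≤ n) :
    ∑ i, bfun t n a i = n := by
  have h10 := one_ne_zero_fin t ht
  have key : ∀ i : Fin t, bfun t n a i =
      (if i = (0 : Fin t) then a else 0) + (if i = (1 : Fin t) then n - a else 0) := by
    intro i
    unfold bfun
    split_ifs <;> omega
  rw [Finset.sum_congr rfl (fun i _ => key i), Finset.sum_add_distrib,
    Finset.sum_ite_eq' Finset.univ (0 : Fin t) (fun _ => a),
    Finset.sum_ite_eq' Finset.univ (1 : Fin t) (fun _ => n - a),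
    if_pos (Finset.mem_univ _), if_pos (Finset.mem_univ _)]
  omega



section BinSpan
variable (k : Type*) [Field k] {R : Type*} [CommRing R] [Algebra k R]

/-- Span of the "binary monomials" `α^a β^(n-a)`. -/
def binSpan (α β : R) (n : ℕ) : Submodule k R :=
  Submodule.span k {x | ∃ a, a ≤ n ∧ x = α ^ a * β ^ (n - a)}

variable {k}

lemma binSpan_mul {α β : R} {n₁ n₂ : ℕ} {x y : R} (hx : x ∈ binSpan k α β n₁)
    (hy : y ∈ binSpan k α β n₂) : x * y ∈ binSpan k α β (n₁ + n₂) := by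
  induction hx using Submodule.span_induction with
  | mem x hxm =>
    induction hy using Submodule.span_induction with
    | mem y hym =>
      obtain ⟨a, ha, rfl⟩ := hxm
      obtain ⟨b, hb, rfl⟩ := hym
      refine Submodule.subset_span ⟨a + b, by omega, ?_⟩
      have h3 : n₁ + n₂ - (a + b) = (n₁ - a) + (n₂ - b) := by omega
      rw [h3, pow_add, pow_add]; ring
    | zero => rw [mul_zero]; exact zero_mem _
    | add y₁ y₂ _ _ h1 h2 => rw [mul_add]; exact add_mem h1 h2
    | smul cc y _ h => rw [mul_smul_comm]; exact Submodule.smul_mem _ _ h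
  | zero => rw [zero_mul]; exact zero_mem _
  | add x₁ x₂ _ _ h1 h2 => rw [add_mul]; exact add_mem h1 h2
  | smul cc x _ h => rw [smul_mul_assoc]; exact Submodule.smul_mem _ _ h

lemma one_mem_binSpan (α β : R) : (1 : R) ∈ binSpan k α β 0 :=
  Submodule.subset_span ⟨0, le_refl _, by simp⟩

lemma binSpan_pow {α β v : R} (hv : v ∈ binSpan k α β 1) (b : ℕ) :
    v ^ b ∈ binSpan k α β b := by
  induction b with
  | zero => simpa using one_mem_binSpan α β
  | succ b ih => rw [pow_succ]; exact binSpan_mul ih hv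

lemma binSpan_prod {ι : Type*} {α β : R} {w : ι → R} {b : ι → ℕ} (s : Finset ι)
    (hw : ∀ i ∈ s, w i ∈ binSpan k α β 1) :
    (∏ i ∈ s, w i ^ b i) ∈ binSpan k α β (∑ i ∈ s, b i) := by
  classical
  induction s using Finset.cons_induction with
  | empty => simpa using one_mem_binSpan α β
  | cons i s his ih =>
    rw [Finset.prod_cons, Finset.sum_cons]
    exact binSpan_mul (binSpan_pow (hw i (Finset.mem_cons_self i s)) (b i))
      (ih fun j hj => hw j (Finset.mem_cons_of_mem hj))

end BinSpan

section Indep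

open MvPolynomial

variable (t : ℕ) [NeZero t] (p : Fin t → ℕ)
variable {k : Type*} [Field k] (lam : Fin t → k)

lemma indep (ht : 3 ≤ t) (hp : ∀ i, 2 ≤ p i) (Icl : Ideal (MvPolynomial (Fin t) k))
    (hIcl : Icl = Ideal.span { f | ∃ i : Fin t, 2 ≤ (i : ℕ) ∧
        f = MvPolynomial.X i ^ p i - MvPolynomial.X (0 : Fin t) ^ p 0
            - MvPolynomial.C (lam i) * MvPolynomial.X (1 : Fin t) ^ p 1 })
    (c : Fin t → ℕ) (n : ℕ) :
    LinearIndependent k (fun a : Fin (n + 1) =>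
      Ideal.Quotient.mk Icl (∏ i, MvPolynomial.X i ^ (mExp t p c n a.val i))) := by
  classical
  set K := AlgebraicClosure k with hK
  letI : Algebra k K := inferInstance
  -- choose evaluation points
  set bad : Finset K := insert 0 (Finset.image (fun i => - algebraMap k K (lam i)) Finset.univ)
    with hbad
  have hinf : ((bad : Set K)ᶜ).Infinite := bad.finite_toSet.infinite_compl
  set e := hinf.natEmbedding with he
  set A : Fin (n + 1) → K := fun j => (e j.val).val with hA
  have hAinj : Function.Injective A := by
    intro a b hab
    have := e.injective (Subtype.ext hab)
    exact Fin.val_injective this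
  have hAbad : ∀ j, A j ∉ bad := fun j => (e j.val).2
  have hA0 : ∀ j, A j ≠ 0 := fun j h => hAbad j (by rw [h, hbad]; exact Finset.mem_insert_self _ _)
  have hAl : ∀ j (i : Fin t), A j + algebraMap k K (lam i) ≠ 0 := by
    intro j i h
    refine hAbad j ?_
    have : A j = - algebraMap k K (lam i) := by linear_combination h
    rw [this, hbad]
    exact Finset.mem_insert_of_mem (Finset.mem_image_of_mem _ (Finset.mem_univ i))
  -- choose roots
  have hroot0 : ∀ j, ∃ s : K, s ^ p 0 = A j := fun j =>
    IsAlgClosed.exists_pow_nat_eq _ (lt_of_lt_of_le two_pos (hp 0))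
  choose s hs using hroot0
  have hrooti : ∀ (j : Fin (n+1)) (i : Fin t), ∃ z : K,
      z ^ p i = A j + algebraMap k K (lam i) := fun j i =>
    IsAlgClosed.exists_pow_nat_eq _ (lt_of_lt_of_le two_pos (hp i))
  choose z hz using hrooti
  set x : Fin (n + 1) → Fin t → K := fun j i =>
    if i = (0 : Fin t) then s j else if i = (1 : Fin t) then 1 else z j i with hx
  have hxne : ∀ j i, x j i ≠ 0 := by
    intro j i
    rw [hx]
    dsimp only
    split
    · intro h; exact hA0 j (by rw [← hs j, h, zero_pow (by have := hp 0; omega)])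
    · split
      · exact one_ne_zero
      · intro h; exact hAl j i (by rw [← hz j i, h, zero_pow (by have := hp i; omega)])
  have h10 : (1 : Fin t) ≠ (0 : Fin t) := by
    intro h
    have h1 : ((1 : Fin t) : ℕ) = 1 % t := Fin.val_one' t
    have h0 : ((0 : Fin t) : ℕ) = 0 := rfl
    rw [h] at h1
    rw [h0] at h1
    have : 1 % t = 1 := Nat.mod_eq_of_lt (by omega)
    omega
  have hx0 : ∀ j, x j 0 = s j := by intro j; rw [hx]; dsimp only; rw [if_pos rfl]
  have hx1 : ∀ j, x j 1 = 1 := by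
    intro j; rw [hx]; dsimp only; rw [if_neg h10, if_pos rfl]
  -- the generators vanish at the points
  have hgen : ∀ j, Icl ≤ RingHom.ker ((MvPolynomial.aeval (x j) :
      MvPolynomial (Fin t) k →ₐ[k] K) : MvPolynomial (Fin t) k →+* K) := by
    intro j
    rw [hIcl, Ideal.span_le]
    rintro g ⟨i, hi2, rfl⟩
    have hi0 : i ≠ (0 : Fin t) := by
      intro h; rw [h] at hi2; norm_num at hi2
    have hi1 : i ≠ (1 : Fin t) := by
      intro h
      have h1 : ((1 : Fin t) : ℕ) = 1 % t := Fin.val_one' t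
      have : 1 % t = 1 := Nat.mod_eq_of_lt (by omega)
      rw [h, h1, this] at hi2
      omega
    have hxi : x j i = z j i := by rw [hx]; dsimp only; rw [if_neg hi0, if_neg hi1]
    simp only [SetLike.mem_coe, RingHom.mem_ker, RingHom.coe_coe, map_sub, map_mul,
      map_pow, MvPolynomial.aeval_X, MvPolynomial.aeval_C]
    rw [hxi, hx0, hx1, hz, hs, one_pow]
    ring
  -- the evaluation maps
  let E : Fin (n + 1) → (MvPolynomial (Fin t) k ⧸ Icl) →ₐ[k] K := fun j =>
    Ideal.Quotient.liftₐ Icl (MvPolynomial.aeval (x j)) (fun a ha => hgen j ha)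
  have hEg : ∀ j (a : Fin (n + 1)),
      E j (Ideal.Quotient.mk Icl (∏ i, MvPolynomial.X i ^ (mExp t p c n a.val i)))
        = (∏ i, x j i ^ c i) * A j ^ (a : ℕ) := by
    intro j a
    have h1 : E j (Ideal.Quotient.mk Icl (∏ i, MvPolynomial.X i ^ (mExp t p c n a.val i)))
        = (MvPolynomial.aeval (x j) : MvPolynomial (Fin t) k →ₐ[k] K)
            (∏ i, MvPolynomial.X i ^ (mExp t p c n a.val i)) := by
      show Ideal.Quotient.liftₐ Icl (MvPolynomial.aeval (x j)) (fun a ha => hgen j ha) _ = _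
      rw [Ideal.Quotient.liftₐ_apply Icl (MvPolynomial.aeval (x j)) (fun a ha => hgen j ha)]
      exact Ideal.Quotient.lift_mk _ _ _
    rw [h1]
    have h2 : (∏ i, MvPolynomial.X i ^ (mExp t p c n a.val i) : MvPolynomial (Fin t) k)
        = (∏ i, MvPolynomial.X i ^ c i) *
          ∏ i, MvPolynomial.X i ^ (if i = (0 : Fin t) then a.val * p 0
            else if i = (1 : Fin t) then (n - a.val) * p 1 else 0) := by
      rw [← Finset.prod_mul_distrib]
      exact Finset.prod_congr rfl fun i _ => by rw [mExp, pow_add]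
    rw [h2, map_mul, map_prod, map_prod]
    simp only [map_pow, MvPolynomial.aeval_X]
    congr 1
    rw [Finset.prod_eq_single (0 : Fin t)]
    · rw [if_pos rfl, hx0, mul_comm (a : ℕ) (p 0), pow_mul, hs]
    · intro i _ hi
      rw [if_neg hi]
      by_cases h1 : i = (1 : Fin t)
      · rw [if_pos h1, h1, hx1, one_pow]
      · rw [if_neg h1, pow_zero]
    · intro h; exact absurd (Finset.mem_univ _) h
  -- linear independence via Vandermonde
  rw [Fintype.linearIndependent_iff]
  intro cv hsum a
  have hM0 : ∀ j, (∏ i, x j i ^ c i) ≠ 0 := fun j =>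
    Finset.prod_ne_zero_iff.mpr fun i _ => pow_ne_zero _ (hxne j i)
  have hj : ∀ j, ∑ b : Fin (n + 1), (algebraMap k K) (cv b) * A j ^ (b : ℕ) = 0 := by
    intro j
    have h0 := congrArg (E j) hsum
    rw [map_sum, map_zero] at h0
    have h1 : ∀ b : Fin (n + 1),
        E j (cv b • Ideal.Quotient.mk Icl (∏ i, MvPolynomial.X i ^ (mExp t p c n b.val i)))
          = (∏ i, x j i ^ c i) * ((algebraMap k K) (cv b) * A j ^ (b : ℕ)) := by
      intro b
      rw [map_smul, hEg, Algebra.smul_def]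
      ring
    rw [Finset.sum_congr rfl (fun b _ => h1 b), ← Finset.mul_sum] at h0
    exact (mul_eq_zero.mp h0).resolve_left (hM0 j)
  have hv := Matrix.eq_zero_of_forall_index_sum_mul_pow_eq_zero hAinj hj
  have : (algebraMap k K) (cv a) = 0 := congrFun hv a
  exact (map_eq_zero (algebraMap k K)).mp this

end Indep

end WPLAux

open WPL in
/-- the graded component `S_{y⃗}` of
`S = k[X₁,…,X_t]/(Xᵢ^{pᵢ} - X₁^{p₁} - λᵢ X₂^{p₂})`, i.e. the `k`-span in `S`
of the residue classes of monomials of degree `y⃗`, has dimension `l + 1`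
if `l ≥ 0`, and is zero if `l < 0`, where `y⃗ = l c⃗ + ∑ lᵢ x⃗ᵢ` is the
normal form of `y⃗`. -/
theorem graded_component_dimension
    (t : ℕ) [NeZero t] (ht : 3 ≤ t) (p : Fin t → ℕ) (hp : ∀ i, 2 ≤ p i)
    (k : Type*) [Field k] (lam : Fin t → k)
    (hlam0 : ∀ i : Fin t, 2 ≤ (i : ℕ) → lam i ≠ 0)
    (hlam : ∀ i j : Fin t, 2 ≤ (i : ℕ) → 2 ≤ (j : ℕ) → i ≠ j → lam i ≠ lam j)
    (Icl : Ideal (MvPolynomial (Fin t) k))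
    (hIcl : Icl = Ideal.span { f | ∃ i : Fin t, 2 ≤ (i : ℕ) ∧
        f = MvPolynomial.X i ^ p i - MvPolynomial.X (0 : Fin t) ^ p 0
            - MvPolynomial.C (lam i) * MvPolynomial.X (1 : Fin t) ^ p 1 })
    (y : L t p) (l : ℤ) (coef : Fin t → ℤ)
    (hcoef : ∀ i, 0 ≤ coef i ∧ coef i ≤ (p i : ℤ) - 1)
    (hy : y = l • cg t p + ∑ i, coef i • xg t p i)
    (V : Submodule k (MvPolynomial (Fin t) k ⧸ Icl))
    (hV : V = Submodule.span k { s | ∃ m : Fin t → ℕ,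
        (∑ i, (m i : ℤ) • xg t p i) = y ∧
        s = Ideal.Quotient.mk Icl (∏ i, MvPolynomial.X i ^ m i) }) :
    (0 ≤ l → Module.finrank k V = l.toNat + 1) ∧ (l < 0 → V = ⊥) := by
  classical
  have h10 : (1 : Fin t) ≠ (0 : Fin t) := WPLAux.one_ne_zero_fin t ht
  constructor
  · -- the case l ≥ 0
    intro hl
    set n := l.toNat with hn
    have hln : (n : ℤ) = l := Int.toNat_of_nonneg hl
    set c : Fin t → ℕ := fun i => (coef i).toNat with hc
    have hcc : ∀ i, (c i : ℤ) = coef i := fun i => Int.toNat_of_nonneg (hcoef i).1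
    set g : Fin (n + 1) → MvPolynomial (Fin t) k ⧸ Icl := fun a =>
      Ideal.Quotient.mk Icl (∏ i, MvPolynomial.X i ^ (WPLAux.mExp t p c n a.val i)) with hg
    -- each `g a` is the class of a monomial of degree `y`
    have hgdeg : ∀ a : Fin (n + 1),
        (∑ i, ((WPLAux.mExp t p c n a.val i : ℤ)) • xg t p i) = y := by
      intro a
      have hm : ∀ i, ((WPLAux.mExp t p c n a.val i : ℤ))
          = coef i + (p i : ℤ) * ((WPLAux.bfun t n a.val i : ℤ)) := by
        intro i
        rw [WPLAux.mExp_eq]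
        push_cast [hcc]
        ring
      rw [WPLAux.deg_of t p coef (fun i => (WPLAux.bfun t n a.val i : ℤ)) _ hm, hy]
      congr 1
      congr 1
      rw [← Nat.cast_sum, WPLAux.sum_bfun t ht n a.val (by omega), hln]
    -- V is the span of the range of g
    set α : MvPolynomial (Fin t) k ⧸ Icl :=
      Ideal.Quotient.mk Icl (MvPolynomial.X (0 : Fin t) ^ p 0) with hα
    set β : MvPolynomial (Fin t) k ⧸ Icl :=
      Ideal.Quotient.mk Icl (MvPolynomial.X (1 : Fin t) ^ p 1) with hβ
    set μ : MvPolynomial (Fin t) k ⧸ Icl :=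
      Ideal.Quotient.mk Icl (∏ i, MvPolynomial.X i ^ c i) with hμ
    -- the classes of the X i ^ p i lie in binSpan 1
    have hvi : ∀ i : Fin t, Ideal.Quotient.mk Icl (MvPolynomial.X i ^ p i)
        ∈ WPLAux.binSpan k α β 1 := by
      intro i
      by_cases h0 : i = (0 : Fin t)
      · subst h0
        exact Submodule.subset_span ⟨1, le_refl 1, by
          rw [pow_one, Nat.sub_self, pow_zero, mul_one, hα]⟩
      · by_cases h1 : i = (1 : Fin t)
        · subst h1
          exact Submodule.subset_span ⟨0, Nat.zero_le 1, by
            rw [pow_zero, one_mul, Nat.sub_zero, pow_one, hβ]⟩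
        · have hi2 : 2 ≤ (i : ℕ) := by
            have hv0 : (i : ℕ) ≠ 0 := fun h => h0 (Fin.ext (by simp [h]))
            have hv1 : (i : ℕ) ≠ 1 := by
              intro h
              exact h1 (Fin.ext (by rw [h, Fin.val_one' t, Nat.mod_eq_of_lt (by omega)]))
            omega
          have hmem : (MvPolynomial.X i ^ p i - MvPolynomial.X (0 : Fin t) ^ p 0
              - MvPolynomial.C (lam i) * MvPolynomial.X (1 : Fin t) ^ p 1) ∈ Icl := by
            rw [hIcl]; exact Ideal.subset_span ⟨i, hi2, rfl⟩
          have hz := (Ideal.Quotient.eq_zero_iff_mem).mpr hmem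
          rw [map_sub, map_sub, sub_eq_zero] at hz
          have hsm : Ideal.Quotient.mk Icl (MvPolynomial.C (lam i)
              * MvPolynomial.X (1 : Fin t) ^ p 1) = lam i • β := by
            rw [← MvPolynomial.smul_eq_C_mul, hβ]
            exact map_smul (Ideal.Quotient.mkₐ k Icl) (lam i) (MvPolynomial.X (1 : Fin t) ^ p 1)
          rw [hsm] at hz
          rw [sub_eq_iff_eq_add'] at hz
          rw [hz]
          refine add_mem (Submodule.subset_span ⟨1, le_refl 1, by
              rw [pow_one, Nat.sub_self, pow_zero, mul_one, hα]⟩)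
            (Submodule.smul_mem _ _ (Submodule.subset_span ⟨0, Nat.zero_le 1, by
              rw [pow_zero, one_mul, Nat.sub_zero, pow_one, hβ]⟩))
    -- μ times binSpan n lands in the span of the range of g
    have key : ∀ q ∈ WPLAux.binSpan k α β n, μ * q ∈ Submodule.span k (Set.range g) := by
      intro q hq
      induction hq using Submodule.span_induction with
      | mem q hqm =>
        obtain ⟨a, ha, rfl⟩ := hqm
        refine Submodule.subset_span ⟨⟨a, by omega⟩, ?_⟩
        show Ideal.Quotient.mk Icl (∏ i, MvPolynomial.X i ^ (WPLAux.mExp t p c n a i))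
          = μ * (α ^ a * β ^ (n - a))
        rw [WPLAux.prod_pow_split t MvPolynomial.X _ c (WPLAux.bfun t n a) p
          (WPLAux.mExp_eq t p c n a),
          WPLAux.prod_pow_bfun t ht (fun i => MvPolynomial.X i ^ p i) n a,
          map_mul, map_mul, hμ, hα, hβ]
        simp only [map_pow]
      | zero => rw [mul_zero]; exact zero_mem _
      | add q₁ q₂ _ _ hq1 hq2 => rw [mul_add]; exact add_mem hq1 hq2
      | smul cc q _ hq1 => rw [mul_smul_comm]; exact Submodule.smul_mem _ _ hq1
    have hVg : V = Submodule.span k (Set.range g) := by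
      rw [hV]
      apply le_antisymm
      · rw [Submodule.span_le]
        rintro s ⟨m, hm, rfl⟩
        obtain ⟨b, hb1, hb2⟩ := WPLAux.deg_inv t p hp coef hcoef l m (by rw [← hy]; exact hm)
        have hmnat : ∀ i, m i = c i + p i * b i := by
          intro i
          have : (m i : ℤ) = ((c i + p i * b i : ℕ) : ℤ) := by
            push_cast [hcc]
            rw [hb1 i]
          exact_mod_cast this
        have hsb : ∑ i, b i = n := by
          have : ((∑ i, b i : ℕ) : ℤ) = (n : ℤ) := by
            rw [Nat.cast_sum, hb2, hln]
          exact_mod_cast this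
        rw [WPLAux.prod_pow_split t MvPolynomial.X m c b p hmnat, map_mul]
        have hre : Ideal.Quotient.mk Icl (∏ i, (MvPolynomial.X i ^ p i) ^ b i)
            = ∏ i, (Ideal.Quotient.mk Icl (MvPolynomial.X i ^ p i)) ^ b i := by
          rw [map_prod]
          exact Finset.prod_congr rfl fun i _ => map_pow _ _ _
        rw [hre]
        refine key _ ?_
        have := WPLAux.binSpan_prod (α := α) (β := β) (k := k)
          (w := fun i => Ideal.Quotient.mk Icl (MvPolynomial.X i ^ p i)) (b := b)
          Finset.univ (fun i _ => hvi i)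
        rw [hsb] at this
        exact this
      · rw [Submodule.span_le]
        rintro s ⟨a, rfl⟩
        exact Submodule.subset_span ⟨WPLAux.mExp t p c n a.val, hgdeg a, rfl⟩
    rw [hVg, finrank_span_eq_card (WPLAux.indep t p lam ht hp Icl hIcl c n),
      Fintype.card_fin]
  · -- the case l < 0
    intro hl
    rw [hV, Submodule.span_eq_bot]
    rintro s ⟨m, hm, rfl⟩
    exfalso
    obtain ⟨b, hb1, hb2⟩ := WPLAux.deg_inv t p hp coef hcoef l m (by rw [← hy]; exact hm)
    have : (0 : ℤ) ≤ ∑ i, (b i : ℤ) :=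
      Finset.sum_nonneg fun i _ => Int.natCast_nonneg (b i)
    omega
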